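/- If A(ε) admits a Laurent (h_A, k_A)-expansion and B(ε) admits a pivotal Laurent (h_B, k_B)-expansion, then on some interval (0, ε'₀] with B(ε) ≠ 0, the quotient D(ε) = A(ε)/B(ε) admits a Laurent (h_D, k_D)-expansion with h_D = h_A − h_B, k_D = min(k_A − h_B, k_B − 2h_B + h_A), and coefficients determined recursively by d_{h_D + r} = b_{h_B}^{−1}(a_{h_A + r} − Σ_{1 ≤ i ≤ r} b_{h_B + i} d_{h_D + r − i}) for r = 0,…,k_D − h_D; the remainder satisfies o_D(ε^{k_D})/ε^{k_D} → 0 as ε → 0+. This expansion is pivotal if and only if a_{h_A}/b_{h_B} ≠ 0. -/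

import Mathlib

open Filter Topology

/-- A Laurent `(h,k)`-asymptotic expansion of `A` on `(0, ε₀]`:
`A(ε) = Σ_{l=h}^{k} a l ε^l + o ε` with `o ε / ε^k → 0` as `ε → 0+`. -/
def IsLaurentExpansion (ε0 : ℝ) (A : ℝ → ℝ) (h k : ℤ) (a : ℤ → ℝ) (o : ℝ → ℝ) : Prop :=
  (∀ ε ∈ Set.Ioc (0:ℝ) ε0, A ε = (∑ l ∈ Finset.Icc h k, a l * ε ^ l) + o ε) ∧
  Filter.Tendsto (fun ε => o ε / ε ^ k) (nhdsWithin 0 (Set.Ioi 0)) (nhds 0)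

/-- The recursively defined coefficients of the quotient expansion. -/
noncomputable def cseq (a b : ℤ → ℝ) (hA hB : ℤ) : ℕ → ℝ
  | r => (b hB)⁻¹ * (a (hA + r) -
      ∑ i ∈ (Finset.range r).attach, b (hB + (i.1 + 1)) * cseq a b hA hB (r - (i.1 + 1)))
decreasing_by have := Finset.mem_range.mp i.2; omega

lemma cseq_eq (a b : ℤ → ℝ) (hA hB : ℤ) (r : ℕ) :
    cseq a b hA hB r = (b hB)⁻¹ * (a (hA + r) -
      ∑ i ∈ Finset.range r, b (hB + (i + 1)) * cseq a b hA hB (r - (i + 1))) := by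
  rw [cseq]
  rw [Finset.sum_attach (Finset.range r)
    (fun i => b (hB + ((i : ℤ) + 1)) * cseq a b hA hB (r - (i + 1)))]

lemma cseq_conv (a b : ℤ → ℝ) (hA hB : ℤ) (hb : b hB ≠ 0) (r : ℕ) :
    ∑ i ∈ Finset.range (r + 1), cseq a b hA hB i * b (hB + ((r - i : ℕ) : ℤ)) = a (hA + r) := by
  rw [Finset.sum_range_succ]
  have h1 : ∑ i ∈ Finset.range r, cseq a b hA hB i * b (hB + ((r - i : ℕ) : ℤ))
      = ∑ i ∈ Finset.range r, b (hB + (i + 1)) * cseq a b hA hB (r - (i + 1)) := by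
    rw [← Finset.sum_range_reflect]
    refine Finset.sum_congr rfl fun j hj => ?_
    have hj' := Finset.mem_range.mp hj
    have e1 : r - 1 - j = r - (j + 1) := by omega
    rw [e1]
    have e2 : (↑(r - (r - (j + 1))) : ℤ) = (j : ℤ) + 1 := by omega
    rw [e2, mul_comm]
  rw [h1]
  have h2 := cseq_eq a b hA hB r
  have h3 : b hB * cseq a b hA hB r = a (hA + r) -
      ∑ i ∈ Finset.range r, b (hB + (i + 1)) * cseq a b hA hB (r - (i + 1)) := by
    rw [h2, ← mul_assoc, mul_inv_cancel₀ hb, one_mul]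
  simp only [Nat.sub_self, Nat.cast_zero, add_zero]
  rw [mul_comm (cseq a b hA hB r)]
  linarith [h3]

lemma sum_Icc_shift (f : ℤ → ℝ) (hF : ℤ) (n : ℕ) (ε : ℝ) (hε : ε ≠ 0) :
    ∑ l ∈ Finset.Icc hF (hF + n), f l * ε ^ l
      = ε ^ hF * ∑ j ∈ Finset.range (n + 1), f (hF + j) * ε ^ j := by
  rw [Finset.mul_sum]
  refine Finset.sum_nbij' (fun l => (l - hF).toNat) (fun j => hF + j) ?_ ?_ ?_ ?_ ?_
  · intro l hl
    simp only [Finset.mem_Icc] at hl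
    simp only [Finset.mem_range]
    omega
  · intro j hj
    simp only [Finset.mem_range] at hj
    simp only [Finset.mem_Icc]
    omega
  · intro l hl
    simp only [Finset.mem_Icc] at hl
    show hF + ((l - hF).toNat : ℤ) = l
    omega
  · intro j hj
    show ((hF + (j:ℤ)) - hF).toNat = j
    omega
  · intro l hl
    simp only [Finset.mem_Icc] at hl
    have h1 : hF + ((l - hF).toNat : ℤ) = l := by omega
    rw [h1]
    have h2 : ε ^ l = ε ^ hF * ε ^ (l - hF).toNat := by
      rw [← zpow_natCast ε ((l - hF).toNat), ← zpow_add₀ hε]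
      congr 1
      omega
    rw [h2]
    ring

lemma coeff_trunc (f : ℕ → ℝ) (n r : ℕ) :
    (∑ j ∈ Finset.range (n+1), Polynomial.C (f j) * Polynomial.X ^ j).coeff r
      = if r ≤ n then f r else 0 := by
  simp [Polynomial.finset_sum_coeff, Polynomial.coeff_C_mul, Polynomial.coeff_X_pow,
    Finset.sum_ite_eq, Nat.lt_succ_iff]

lemma eval_trunc (f : ℕ → ℝ) (n : ℕ) (x : ℝ) :
    (∑ j ∈ Finset.range (n+1), Polynomial.C (f j) * Polynomial.X ^ j).eval x
      = ∑ j ∈ Finset.range (n+1), f j * x ^ j := by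
  simp [Polynomial.eval_finset_sum]

/-- Lemma 2 (v): division rule for Laurent asymptotic expansions. -/
theorem laurent_expansion_div (ε0 : ℝ) (hε0 : 0 < ε0) (hε1 : ε0 ≤ 1)
    (A B : ℝ → ℝ) (hA kA hB kB : ℤ) (hhkA : hA ≤ kA) (hhkB : hB ≤ kB)
    (a b : ℤ → ℝ) (oA oB : ℝ → ℝ)
    (HA : IsLaurentExpansion ε0 A hA kA a oA)
    (HB : IsLaurentExpansion ε0 B hB kB b oB) (hpiv : b hB ≠ 0) :
    ∃ ε0' : ℝ, 0 < ε0' ∧ ε0' ≤ ε0 ∧ (∀ ε ∈ Set.Ioc (0:ℝ) ε0', B ε ≠ 0) ∧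
      ∃ (d : ℤ → ℝ) (oD : ℝ → ℝ),
        IsLaurentExpansion ε0' (fun ε => A ε / B ε) (hA - hB)
          (min (kA - hB) (kB - 2 * hB + hA)) d oD ∧
        (∀ r : ℤ, 0 ≤ r → r ≤ min (kA - hB) (kB - 2 * hB + hA) - (hA - hB) →
          d (hA - hB + r) = (b hB)⁻¹ *
            (a (hA + r) - ∑ i ∈ Finset.Icc 1 r, b (hB + i) * d (hA - hB + r - i))) ∧
        (d (hA - hB) ≠ 0 ↔ a hA / b hB ≠ 0) := by
  obtain ⟨hAe, hAo⟩ := HA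
  obtain ⟨hBe, hBo⟩ := HB
  set nA : ℕ := (kA - hA).toNat with hnA
  set nB : ℕ := (kB - hB).toNat with hnB
  set N : ℕ := min nA nB with hN
  set hD : ℤ := hA - hB with hhD
  set kD : ℤ := min (kA - hB) (kB - 2 * hB + hA) with hkD
  have hnAc : (nA : ℤ) = kA - hA := by omega
  have hnBc : (nB : ℤ) = kB - hB := by omega
  have hNA : N ≤ nA := Nat.min_le_left _ _
  have hNB : N ≤ nB := Nat.min_le_right _ _
  have hkDeq : kD = hD + N := by
    rw [hkD, hhD, hN]
    omega
  set c : ℕ → ℝ := cseq a b hA hB with hc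
  set PA : Polynomial ℝ := ∑ j ∈ Finset.range (nA+1), Polynomial.C (a (hA + j)) * Polynomial.X ^ j
    with hPA
  set PB : Polynomial ℝ := ∑ j ∈ Finset.range (nB+1), Polynomial.C (b (hB + j)) * Polynomial.X ^ j
    with hPB
  set PD : Polynomial ℝ := ∑ j ∈ Finset.range (N+1), Polynomial.C (c j) * Polynomial.X ^ j
    with hPD
  -- divisibility of PA - PD * PB by X^(N+1)
  have hdvd : (Polynomial.X : Polynomial ℝ) ^ (N+1) ∣ (PA - PD * PB) := by
    rw [Polynomial.X_pow_dvd_iff]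
    intro r hr
    have hrN : r ≤ N := by omega
    rw [Polynomial.coeff_sub, Polynomial.coeff_mul,
      Finset.Nat.sum_antidiagonal_eq_sum_range_succ_mk]
    have hPAr : PA.coeff r = a (hA + r) := by
      rw [hPA, coeff_trunc, if_pos (by omega)]
    have hprod : ∑ k ∈ Finset.range (r+1), PD.coeff k * PB.coeff (r - k)
        = ∑ k ∈ Finset.range (r+1), c k * b (hB + ((r - k : ℕ) : ℤ)) := by
      refine Finset.sum_congr rfl fun k hk => ?_
      have hk' := Finset.mem_range.mp hk
      rw [hPD, hPB, coeff_trunc, coeff_trunc, if_pos (by omega), if_pos (by omega)]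
    rw [hPAr, hprod, hc, cseq_conv a b hA hB hpiv r, sub_self]
  obtain ⟨Qp, hQp⟩ := hdvd
  -- tendsto facts
  have tpow : ∀ m : ℕ, Tendsto (fun ε : ℝ => ε ^ m) (𝓝[>] 0) (𝓝 ((0:ℝ) ^ m)) :=
    fun m => ((continuous_pow m).tendsto 0).mono_left nhdsWithin_le_nhds
  have teval : ∀ p : Polynomial ℝ,
      Tendsto (fun ε : ℝ => p.eval ε) (𝓝[>] 0) (𝓝 (p.eval 0)) :=
    fun p => (p.continuous.tendsto 0).mono_left nhdsWithin_le_nhds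
  have tid : Tendsto (fun ε : ℝ => ε) (𝓝[>] 0) (𝓝 0) :=
    (continuous_id.tendsto (0:ℝ)).mono_left nhdsWithin_le_nhds
  have hPB0 : PB.eval 0 = b hB := by
    rw [← Polynomial.coeff_zero_eq_eval_zero, hPB, coeff_trunc, if_pos (Nat.zero_le _)]
    simp
  have tv : Tendsto (fun ε : ℝ => PB.eval ε + ε ^ nB * (oB ε / ε ^ kB)) (𝓝[>] 0)
      (𝓝 (b hB)) := by
    have h := (teval PB).add ((tpow nB).mul hBo)
    rw [hPB0] at h
    simpa using h
  have hIoc : Set.Ioc (0:ℝ) ε0 ∈ 𝓝[>] (0:ℝ) :=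
    Ioc_mem_nhdsGT_of_mem ⟨le_refl _, hε0⟩
  -- decomposition on (0, ε0]
  have hAfac : ∀ ε ∈ Set.Ioc (0:ℝ) ε0,
      A ε = ε ^ hA * (PA.eval ε + ε ^ nA * (oA ε / ε ^ kA)) := by
    intro ε hε
    have hεne : ε ≠ 0 := ne_of_gt hε.1
    have hkA' : kA = hA + (nA:ℤ) := by omega
    have hoAe : (ε:ℝ) ^ hA * (ε ^ nA * (oA ε / ε ^ kA)) = oA ε := by
      rw [← mul_assoc, ← zpow_natCast ε nA, ← zpow_add₀ hεne, ← hkA', mul_comm,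
        div_mul_cancel₀ _ (zpow_ne_zero _ hεne)]
    rw [hAe ε hε, hPA, eval_trunc, mul_add, hoAe, hkA', ← sum_Icc_shift a hA nA ε hεne]
  have hBfac : ∀ ε ∈ Set.Ioc (0:ℝ) ε0,
      B ε = ε ^ hB * (PB.eval ε + ε ^ nB * (oB ε / ε ^ kB)) := by
    intro ε hε
    have hεne : ε ≠ 0 := ne_of_gt hε.1
    have hkB' : kB = hB + (nB:ℤ) := by omega
    have hoBe : (ε:ℝ) ^ hB * (ε ^ nB * (oB ε / ε ^ kB)) = oB ε := by
      rw [← mul_assoc, ← zpow_natCast ε nB, ← zpow_add₀ hεne, ← hkB', mul_comm,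
        div_mul_cancel₀ _ (zpow_ne_zero _ hεne)]
    rw [hBe ε hε, hPB, eval_trunc, mul_add, hoBe, hkB', ← sum_Icc_shift b hB nB ε hεne]
  -- B nonzero near 0
  have tBq : Tendsto (fun ε : ℝ => B ε / ε ^ hB) (𝓝[>] 0) (𝓝 (b hB)) := by
    refine tv.congr' ?_
    filter_upwards [hIoc] with ε hε
    have hεne : ε ≠ 0 := ne_of_gt hε.1
    rw [hBfac ε hε, mul_comm ((ε:ℝ) ^ hB), mul_div_assoc, div_self (zpow_ne_zero _ hεne),
      mul_one]
  have hBev : ∀ᶠ ε in 𝓝[>] (0:ℝ), B ε ≠ 0 ∧ ε ∈ Set.Ioc (0:ℝ) ε0 := by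
    filter_upwards [tBq.eventually_ne hpiv, hIoc] with ε h1 h2
    refine ⟨fun h0 => h1 ?_, h2⟩
    rw [h0, zero_div]
  obtain ⟨u0, hu0, husub⟩ := mem_nhdsGT_iff_exists_Ioc_subset.mp hBev
  set ε0' : ℝ := min u0 ε0 with hε0'
  have hε0'pos : 0 < ε0' := lt_min hu0 hε0
  have hε0'le : ε0' ≤ ε0 := min_le_right _ _
  have hBne : ∀ ε ∈ Set.Ioc (0:ℝ) ε0', B ε ≠ 0 := fun ε hε =>
    (husub ⟨hε.1, le_trans hε.2 (min_le_left _ _)⟩).1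
  have hIoc' : Set.Ioc (0:ℝ) ε0' ∈ 𝓝[>] (0:ℝ) :=
    Ioc_mem_nhdsGT_of_mem ⟨le_refl _, hε0'pos⟩
  refine ⟨ε0', hε0'pos, hε0'le, hBne, ?_⟩
  set d : ℤ → ℝ := fun l => c (l - hD).toNat with hd
  set oD : ℝ → ℝ := fun ε => A ε / B ε - ∑ l ∈ Finset.Icc hD kD, d l * ε ^ l with hoD
  have hdl : ∀ l : ℤ, d l = c (l - hD).toNat := fun _ => rfl
  have hdj : ∀ j : ℕ, d (hD + j) = c j := by
    intro j
    rw [hdl]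
    simp only [add_sub_cancel_left, Int.toNat_natCast]
  refine ⟨d, oD, ⟨?_, ?_⟩, ?_, ?_⟩
  · -- expansion identity
    intro ε hε
    rw [hoD]
    ring
  · -- remainder tendsto
    have tG : Tendsto (fun ε : ℝ => (ε * Qp.eval ε + ε ^ (nA - N) * (oA ε / ε ^ kA)
        - PD.eval ε * (ε ^ (nB - N) * (oB ε / ε ^ kB)))
        / (PB.eval ε + ε ^ nB * (oB ε / ε ^ kB))) (𝓝[>] 0) (𝓝 0) := by
      have num := ((tid.mul (teval Qp)).add ((tpow (nA - N)).mul hAo)).sub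
        ((teval PD).mul ((tpow (nB - N)).mul hBo))
      have h := num.div tv hpiv
      simpa [Pi.div_def] using h
    refine tG.congr' ?_
    filter_upwards [hIoc'] with ε hε
    have hε0m : ε ∈ Set.Ioc (0:ℝ) ε0 := ⟨hε.1, le_trans hε.2 hε0'le⟩
    have hεne : ε ≠ 0 := ne_of_gt hε.1
    have hvne : PB.eval ε + ε ^ nB * (oB ε / ε ^ kB) ≠ 0 := by
      intro h0
      exact hBne ε hε (by rw [hBfac ε hε0m, h0, mul_zero])
    have hNne : (ε:ℝ) ^ N ≠ 0 := pow_ne_zero _ hεne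
    have hDne : (ε:ℝ) ^ hD ≠ 0 := zpow_ne_zero _ hεne
    set u : ℝ := PA.eval ε + ε ^ nA * (oA ε / ε ^ kA) with hu
    set v : ℝ := PB.eval ε + ε ^ nB * (oB ε / ε ^ kB) with hv
    -- quotient form
    have hABq : A ε / B ε = ε ^ hD * u / v := by
      rw [hAfac ε hε0m, hBfac ε hε0m, ← hu, ← hv]
      have hdiv : (ε:ℝ) ^ hA = ε ^ hB * ε ^ hD := by
        rw [← zpow_add₀ hεne]; congr 1; omega
      rw [hdiv, mul_assoc, mul_div_mul_left _ _ (zpow_ne_zero _ hεne), mul_div_assoc]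
    -- sum of d part
    have hsumd : ∑ l ∈ Finset.Icc hD kD, d l * ε ^ l = ε ^ hD * PD.eval ε := by
      rw [hkDeq, sum_Icc_shift d hD N ε hεne, hPD, eval_trunc]
      congr 1
      exact Finset.sum_congr rfl fun j _ => by rw [hdj j]
    have hεkD : (ε:ℝ) ^ kD = ε ^ hD * ε ^ N := by
      rw [hkDeq, zpow_add₀ hεne, zpow_natCast]
    -- key polynomial identity
    have hpoly : PA.eval ε - PD.eval ε * PB.eval ε = ε ^ (N+1) * Qp.eval ε := by
      have h := congrArg (Polynomial.eval ε) hQp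
      simpa using h
    have key : u - PD.eval ε * v = ε ^ N * (ε * Qp.eval ε + ε ^ (nA - N) * (oA ε / ε ^ kA)
        - PD.eval ε * (ε ^ (nB - N) * (oB ε / ε ^ kB))) := by
      have hnA' : (ε:ℝ) ^ nA = ε ^ N * ε ^ (nA - N) := by
        rw [← pow_add]; congr 1; omega
      have hnB' : (ε:ℝ) ^ nB = ε ^ N * ε ^ (nB - N) := by
        rw [← pow_add]; congr 1; omega
      calc u - PD.eval ε * v
          = (PA.eval ε - PD.eval ε * PB.eval ε) + ε ^ nA * (oA ε / ε ^ kA)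
            - PD.eval ε * (ε ^ nB * (oB ε / ε ^ kB)) := by rw [hu, hv]; ring
        _ = _ := by rw [hpoly, hnA', hnB']; ring
    show _ = oD ε / ε ^ kD
    rw [hoD]
    show _ = (A ε / B ε - ∑ l ∈ Finset.Icc hD kD, d l * ε ^ l) / ε ^ kD
    rw [hABq, hsumd, hεkD]
    have e2 : ε ^ hD * u / v - ε ^ hD * PD.eval ε = ε ^ hD * ((u - PD.eval ε * v) / v) := by
      field_simp
    rw [e2, key]
    field_simp
  · -- recursion
    intro r hr0 hrN
    have hr' : r = ((r.toNat : ℕ) : ℤ) := by omega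
    have hdr : d (hD + r) = c r.toNat := by
      rw [hdl]
      congr 1
      omega
    rw [hdr, hc, cseq_eq]
    have ha' : a (hA + (r.toNat : ℤ)) = a (hA + r) := by rw [← hr']
    rw [ha']
    congr 2
    refine Finset.sum_nbij' (fun i : ℕ => (i : ℤ) + 1) (fun i : ℤ => (i - 1).toNat)
      ?_ ?_ ?_ ?_ ?_
    · intro i hi
      have := Finset.mem_range.mp hi
      simp only [Finset.mem_Icc]
      omega
    · intro i hi
      simp only [Finset.mem_Icc] at hi
      simp only [Finset.mem_range]
      omega
    · intro i hi
      show (((i:ℤ) + 1) - 1).toNat = i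
      omega
    · intro i hi
      simp only [Finset.mem_Icc] at hi
      show (((i - 1).toNat : ℤ) + 1) = i
      omega
    · intro i hi
      have hi' := Finset.mem_range.mp hi
      show b (hB + ((i:ℤ) + 1)) * c (r.toNat - (i + 1))
          = b (hB + ((i:ℤ) + 1)) * d (hD + r - ((i:ℤ) + 1))
      rw [hdl]
      congr 2
      omega
  · -- pivotal
    have hd0 : d hD = a hA / b hB := by
      rw [hdl, sub_self, Int.toNat_zero, hc, cseq_eq]
      simp [div_eq_inv_mul]
    rw [hd0]
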